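/- Let B ∈ ℂ^{p×n} have full row rank, let B† = Bᴴ(BBᴴ)^{-1}, let x̂ ∈ ℂ^n, and let y ∈ ℝ^p be given by y_r = |(B x̂)_r|². For x_l ∈ ℂ^n and a vector u ∈ ℂ^p with |u_r| = 1 for all r, define x^u = x_l + B†(√y ⊙ u − B x_l). Then for any two such unimodular vectors u and v, ‖x^u − x^v‖₂ ≤ ‖B†‖ · ‖B‖ · (max_r |u_r − v_r|) · ‖x̂‖₂, where ‖B‖ and ‖B†‖ denote operator (spectral) norms; since ‖B‖ = σ_max(B) and ‖B†‖ = 1/σ_min(B), this bound is κ(B) · max_r|u_r − v_r| · ‖x̂‖₂ with κ(B) = σ_max(B)/σ_min(B). (Projection error analysis of the block Kaczmarz phase heuristic.) -/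

import Mathlib

open scoped BigOperators ComplexConjugate

/-- phase(w) = w/|w| if w ≠ 0, else 1. -/
noncomputable def phase (w : ℂ) : ℂ := if w = 0 then 1 else w / ‖w‖

/-- Euclidean norm of a complex vector. -/
noncomputable def evnorm {ι : Type*} [Fintype ι] (v : ι → ℂ) : ℝ :=
  Real.sqrt (∑ i, ‖v i‖ ^ 2)

/-- Euclidean norm of a real vector. -/
noncomputable def rvnorm {ι : Type*} [Fintype ι] (v : ι → ℝ) : ℝ :=
  Real.sqrt (∑ i, (v i) ^ 2)

/-- Standard Hermitian inner product, conjugate-linear in the first argument. -/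
noncomputable def hinner {n : ℕ} (a x : Fin n → ℂ) : ℂ := ∑ i, conj (a i) * x i

/-- dist(x, x̂) = min over unimodular ω of ‖x − ω·x̂‖₂. -/
noncomputable def pdist {n : ℕ} (x xhat : Fin n → ℂ) : ℝ :=
  ⨅ ω : {ω : ℂ // ‖ω‖ = 1}, evnorm (x - (ω : ℂ) • xhat)

/-- Operator (spectral) norm of a complex matrix w.r.t. Euclidean norms. -/
noncomputable def matOpNorm {ι κ : Type*} [Fintype ι] [Fintype κ] [DecidableEq κ]
    (M : Matrix ι κ ℂ) : ℝ :=
  ‖LinearMap.toContinuousLinearMap (Matrix.toEuclideanLin M)‖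

lemma evnorm_eq {ι : Type*} [Fintype ι] (v : ι → ℂ) :
    evnorm v = ‖(WithLp.equiv 2 (ι → ℂ)).symm v‖ := by
  rw [EuclideanSpace.norm_eq, evnorm]
  simp

lemma evnorm_mulVec_le {ι κ : Type*} [Fintype ι] [Fintype κ] [DecidableEq κ]
    (M : Matrix ι κ ℂ) (w : κ → ℂ) :
    evnorm (M.mulVec w) ≤ matOpNorm M * evnorm w := by
  rw [evnorm_eq, evnorm_eq, WithLp.equiv_symm_apply, ← Matrix.toEuclideanLin_apply_piLp_toLp]
  exact (LinearMap.toContinuousLinearMap (Matrix.toEuclideanLin M)).le_opNorm _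

/-- Projection error analysis of the block Kaczmarz phase heuristic. -/
theorem stmt7 {p n : ℕ} (B : Matrix (Fin p) (Fin n) ℂ)
    (hB : IsUnit (B * B.conjTranspose))
    (Bpinv : Matrix (Fin n) (Fin p) ℂ)
    (hBpinv : Bpinv = B.conjTranspose * (B * B.conjTranspose)⁻¹)
    (xhat : Fin n → ℂ) (y : Fin p → ℝ)
    (hy : ∀ r, y r = ‖B.mulVec xhat r‖ ^ 2)
    (xl : Fin n → ℂ) (u v : Fin p → ℂ)
    (hu : ∀ r, ‖u r‖ = 1) (hv : ∀ r, ‖v r‖ = 1) :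
    evnorm ((xl + Bpinv.mulVec (fun r => (Real.sqrt (y r) : ℂ) * u r - B.mulVec xl r)) -
        (xl + Bpinv.mulVec (fun r => (Real.sqrt (y r) : ℂ) * v r - B.mulVec xl r))) ≤
      matOpNorm Bpinv * matOpNorm B * (⨆ r, ‖u r - v r‖) * evnorm xhat := by
  set C := ⨆ r, ‖u r - v r‖ with hC
  have hCnn : 0 ≤ C := by
    cases' Nat.eq_zero_or_pos p with hp hp
    · subst hp
      simp [hC, Real.iSup_of_isEmpty]
    · refine le_trans ?_ (le_ciSup (f := fun r => ‖u r - v r‖)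
        (Finite.bddAbove_range _) ⟨0, hp⟩)
      positivity
  have hle : ∀ r, ‖u r - v r‖ ≤ C := fun r =>
    le_ciSup (f := fun r => ‖u r - v r‖) (Finite.bddAbove_range _) r
  -- simplify the difference
  have hdiff : (xl + Bpinv.mulVec (fun r => (Real.sqrt (y r) : ℂ) * u r - B.mulVec xl r)) -
        (xl + Bpinv.mulVec (fun r => (Real.sqrt (y r) : ℂ) * v r - B.mulVec xl r)) =
      Bpinv.mulVec (fun r => (Real.sqrt (y r) : ℂ) * (u r - v r)) := by
    have hfun : ((fun r => (Real.sqrt (y r) : ℂ) * u r - B.mulVec xl r) -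
        fun r => (Real.sqrt (y r) : ℂ) * v r - B.mulVec xl r) =
        fun r => (Real.sqrt (y r) : ℂ) * (u r - v r) := by
      funext r
      simp only [Pi.sub_apply]
      ring
    rw [add_sub_add_left_eq_sub, ← Matrix.mulVec_sub, hfun]
  rw [hdiff]
  have h1 := evnorm_mulVec_le Bpinv (fun r => (Real.sqrt (y r) : ℂ) * (u r - v r))
  have h2 : evnorm (fun r => (Real.sqrt (y r) : ℂ) * (u r - v r)) ≤
      C * evnorm (B.mulVec xhat) := by
    rw [evnorm, evnorm, ← Real.sqrt_sq hCnn, ← Real.sqrt_mul (sq_nonneg C)]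
    apply Real.sqrt_le_sqrt
    rw [Finset.mul_sum]
    apply Finset.sum_le_sum
    intro r _
    have hyr : Real.sqrt (y r) = ‖B.mulVec xhat r‖ := by
      rw [hy r, Real.sqrt_sq (norm_nonneg _)]
    rw [norm_mul, Complex.norm_real, Real.norm_eq_abs, abs_of_nonneg (Real.sqrt_nonneg _), hyr,
      mul_pow]
    have h := pow_le_pow_left₀ (norm_nonneg (u r - v r)) (hle r) 2
    nlinarith [sq_nonneg (‖B.mulVec xhat r‖)]
  have h3 := evnorm_mulVec_le B xhat
  calc evnorm (Bpinv.mulVec (fun r => (Real.sqrt (y r) : ℂ) * (u r - v r)))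
      ≤ matOpNorm Bpinv * (C * evnorm (B.mulVec xhat)) :=
        h1.trans (mul_le_mul_of_nonneg_left h2 (norm_nonneg _))
    _ ≤ matOpNorm Bpinv * (C * (matOpNorm B * evnorm xhat)) := by
        apply mul_le_mul_of_nonneg_left _ (norm_nonneg _)
        exact mul_le_mul_of_nonneg_left h3 hCnn
    _ = matOpNorm Bpinv * matOpNorm B * C * evnorm xhat := by ring
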